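/- Let φ : ℝ^d × ℝ^d → [0,∞] be a symmetric measurable pair potential, β > 0, z > 0, and suppose there are α > 0 and a measurable A ⊆ ℝ^d with B(0,α) ⊆ A such that φ(x,y) = +∞ whenever x − y ∈ A (hard core, assumption (A1)). Let a > 0 with a√d ≤ α. Call a countable set γ ⊆ ℝ^d authorised if x − y ∉ A for all distinct x, y ∈ γ. For i ∈ ℤ^d and an authorised γ ⊆ ℝ^d ∖ Λ_{a,i}, let h_γ(x) := e^{−β Σ_{y∈γ} φ(x,y)} ∈ [0,1] (with e^{−∞} = 0) and let μ_γ := μ_{h_γ} be the associated single-site specification measure on {∗} ⊔ ℝ^d with Λ := Λ_{a,i}. Then for every i ∈ ℤ^d: Σ_{j∈ℤ^d, j≠i} sup{ d_TV(μ_γ, μ_{γ̃}) : γ, γ̃ ⊆ ℝ^d ∖ Λ_{a,i} authorised, with γ ∖ Λ_{a,j} = γ̃ ∖ Λ_{a,j} } ≤ z · sup_{x∈ℝ^d} ∫_{ℝ^d} Ψ_a(x,y) dy. -/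

import Mathlib

open MeasureTheory ENNReal

/-- The half-open cube `Λ_{a,j} = a j + (−a/2, a/2]^d` of side `a` centred at `a j`. -/
def cube (d : ℕ) (a : ℝ) (j : Fin d → ℤ) : Set (EuclideanSpace ℝ (Fin d)) :=
  {x | ∀ k : Fin d, x k - a * (j k : ℝ) ∈ Set.Ioc (-(a / 2)) (a / 2)}

/-- `expNegE t = e^{−t}` for `t ∈ [0,∞]` as an element of `[0,∞]`, with `e^{−∞} = 0`. -/
noncomputable def expNegE (t : ℝ≥0∞) : ℝ≥0∞ :=
  if t = ∞ then 0 else ENNReal.ofReal (Real.exp (-t.toReal))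

/-- The Mayer function `(x,y) ↦ 1 − e^{−βφ(x,y)}`, valued in `[0,∞]` (in fact `[0,1]`). -/
noncomputable def mayer {d : ℕ}
    (φ : EuclideanSpace ℝ (Fin d) → EuclideanSpace ℝ (Fin d) → ℝ≥0∞) (β : ℝ)
    (x y : EuclideanSpace ℝ (Fin d)) : ℝ≥0∞ :=
  1 - expNegE (ENNReal.ofReal β * φ x y)

/-- The discretised Mayer majorant
`Ψ_a(x,y) = Σ_{j∈ℤ^d} 1_{y ∈ Λ_{a,j}} · sup_{y' ∈ Λ_{a,j}} (1 − e^{−βφ(x,y')})`. -/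
noncomputable def Psi {d : ℕ}
    (φ : EuclideanSpace ℝ (Fin d) → EuclideanSpace ℝ (Fin d) → ℝ≥0∞) (β : ℝ) (a : ℝ)
    (x y : EuclideanSpace ℝ (Fin d)) : ℝ≥0∞ :=
  ∑' j : Fin d → ℤ,
    (cube d a j).indicator (fun _ => ⨆ y' ∈ cube d a j, mayer φ β x y') y

/-- `expNegR t = e^{−t}` for `t ∈ [0,∞]`, with the convention `e^{−∞} = 0`. -/
noncomputable def expNegR (t : ℝ≥0∞) : ℝ :=
  if t = ∞ then 0 else Real.exp (-t.toReal)

/-- The Boltzmann weight `h_γ(x) = e^{−β Σ_{y∈γ} φ(x,y)} ∈ [0,1]` of the configuration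
with a single point at `x`, given the boundary condition `γ`. -/
noncomputable def hweight {d : ℕ}
    (φ : EuclideanSpace ℝ (Fin d) → EuclideanSpace ℝ (Fin d) → ℝ≥0∞) (β : ℝ)
    (γ : Set (EuclideanSpace ℝ (Fin d))) (x : EuclideanSpace ℝ (Fin d)) : ℝ :=
  expNegR (ENNReal.ofReal β * ∑' y : γ, φ x y)

/-- The partition function `Z(h) = e^{−z|Λ|} (1 + z ∫_Λ h)`. -/
noncomputable def Zpart {d : ℕ} (Λ : Set (EuclideanSpace ℝ (Fin d))) (z : ℝ)
    (h : EuclideanSpace ℝ (Fin d) → ℝ) : ℝ :=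
  Real.exp (-z * (volume Λ).toReal) * (1 + z * ∫ x in Λ, h x)

/-- The single-site specification measure `μ_h` on `{∗} ⊔ ℝ^d`: it puts mass
`e^{−z|Λ|}/Z(h)` on the atom `∗` (the empty configuration) and has density
`z e^{−z|Λ|} h(x)/Z(h)` w.r.t. Lebesgue measure on `Λ`. -/
noncomputable def specMeasure {d : ℕ} (Λ : Set (EuclideanSpace ℝ (Fin d))) (z : ℝ)
    (h : EuclideanSpace ℝ (Fin d) → ℝ) :
    Measure (Unit ⊕ EuclideanSpace ℝ (Fin d)) :=
  (ENNReal.ofReal (Real.exp (-z * (volume Λ).toReal) / Zpart Λ z h)) •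
      Measure.dirac (Sum.inl ()) +
    Measure.map Sum.inr
      ((volume.restrict Λ).withDensity fun x =>
        ENNReal.ofReal (z * Real.exp (-z * (volume Λ).toReal) * h x / Zpart Λ z h))

/-- Total variation distance between two measures, valued in `ℝ≥0∞`:
`sup_B |μ(B) − ν(B)|`, expressed with truncated subtraction. -/
noncomputable def tvEDist {Ω : Type*} [MeasurableSpace Ω] (μ ν : Measure Ω) : ℝ≥0∞ :=
  ⨆ B : {B : Set Ω // MeasurableSet B}, (μ B - ν B) ⊔ (ν B - μ B)

/-- A configuration `γ` is authorised (w.r.t. the hard-core exclusion region `A`)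
if no two distinct points of `γ` have their difference in `A`. -/
def Authorised {d : ℕ} (A : Set (EuclideanSpace ℝ (Fin d)))
    (γ : Set (EuclideanSpace ℝ (Fin d))) : Prop :=
  ∀ x ∈ γ, ∀ y ∈ γ, x ≠ y → x - y ∉ A


section Aux
variable {d : ℕ}

lemma expNegR_nonneg (t : ℝ≥0∞) : 0 ≤ expNegR t := by
  unfold expNegR; split
  · exact le_refl _
  · exact (Real.exp_pos _).le

lemma expNegR_le_one (t : ℝ≥0∞) : expNegR t ≤ 1 := by
  unfold expNegR; split
  · norm_num
  · exact Real.exp_le_one_iff.mpr (by simp [ENNReal.toReal_nonneg])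

lemma expNegR_zero : expNegR 0 = 1 := by simp [expNegR]

lemma ofReal_expNegR (t : ℝ≥0∞) : ENNReal.ofReal (expNegR t) = expNegE t := by
  unfold expNegR expNegE; split <;> simp

lemma expNegR_add (p q : ℝ≥0∞) : expNegR (p + q) = expNegR p * expNegR q := by
  unfold expNegR
  rcases eq_or_ne p ∞ with hp | hp
  · simp [hp]
  rcases eq_or_ne q ∞ with hq | hq
  · simp [hq]
  rw [if_neg (by simp [hp, hq]), if_neg hp, if_neg hq, ENNReal.toReal_add hp hq,
    neg_add, Real.exp_add]

lemma measurable_expNegR : Measurable expNegR := by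
  unfold expNegR
  apply Measurable.ite (MeasurableSet.singleton ∞) measurable_const
  exact (Real.measurable_exp.comp (ENNReal.measurable_toReal.neg))

lemma hweight_nonneg (φ : EuclideanSpace ℝ (Fin d) → EuclideanSpace ℝ (Fin d) → ℝ≥0∞)
    (β : ℝ) (γ : Set (EuclideanSpace ℝ (Fin d))) (x : EuclideanSpace ℝ (Fin d)) :
    0 ≤ hweight φ β γ x := expNegR_nonneg _

lemma hweight_le_one (φ : EuclideanSpace ℝ (Fin d) → EuclideanSpace ℝ (Fin d) → ℝ≥0∞)
    (β : ℝ) (γ : Set (EuclideanSpace ℝ (Fin d))) (x : EuclideanSpace ℝ (Fin d)) :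
    hweight φ β γ x ≤ 1 := expNegR_le_one _

lemma hweight_measurable {φ : EuclideanSpace ℝ (Fin d) → EuclideanSpace ℝ (Fin d) → ℝ≥0∞}
    (hφ : Measurable (Function.uncurry φ)) (β : ℝ)
    {γ : Set (EuclideanSpace ℝ (Fin d))} (hγ : γ.Countable) :
    Measurable (hweight φ β γ) := by
  haveI := hγ.to_subtype
  apply measurable_expNegR.comp
  apply Measurable.const_mul
  exact Measurable.ennreal_tsum fun y =>
    hφ.comp (measurable_id.prodMk measurable_const)

lemma cube_measurableSet (a : ℝ) (j : Fin d → ℤ) : MeasurableSet (cube d a j) := by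
  have : cube d a j = ⋂ k : Fin d, {x : EuclideanSpace ℝ (Fin d) |
      x k - a * (j k : ℝ) ∈ Set.Ioc (-(a / 2)) (a / 2)} := by
    ext x; simp [cube, Set.mem_iInter]
  rw [this]
  exact MeasurableSet.iInter fun k =>
    (Measurable.sub (by fun_prop : Measurable fun x : EuclideanSpace ℝ (Fin d) => x k) measurable_const) measurableSet_Ioc

variable {d : ℕ}

lemma cube_eq_preimage (a : ℝ) (j : Fin d → ℤ) :
    cube d a j = (MeasurableEquiv.toLp 2 (Fin d → ℝ)).symm ⁻¹'
      (Set.univ.pi fun k => Set.Ioc (a * (j k : ℝ) - a / 2) (a * (j k : ℝ) + a / 2)) := by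
  ext x
  simp only [cube, Set.mem_setOf_eq, Set.mem_preimage, Set.mem_pi, Set.mem_univ,
    forall_true_left, Set.mem_Ioc, MeasurableEquiv.coe_toLp_symm, MeasurableEquiv.toLp_symm_apply]
  constructor
  · intro h k; have := h k; constructor <;> [linarith [this.1]; linarith [this.2]]
  · intro h k; have := h k; constructor <;> [linarith [this.1]; linarith [this.2]]

lemma volume_cube {a : ℝ} (ha : 0 ≤ a) (j : Fin d → ℤ) :
    volume (cube d a j) = ENNReal.ofReal (a ^ d) := by
  rw [cube_eq_preimage,
    (EuclideanSpace.volume_preserving_symm_measurableEquiv_toLp (Fin d)).measure_preimage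
      ((MeasurableSet.univ_pi fun k => measurableSet_Ioc).nullMeasurableSet),
    volume_pi_pi]
  simp only [Real.volume_Ioc]
  have : ∀ k : Fin d, a * (j k : ℝ) + a / 2 - (a * (j k : ℝ) - a / 2) = a := by
    intro k; ring
  simp only [this]
  rw [Finset.prod_const, ← ENNReal.ofReal_pow ha]
  simp

lemma dist_lt_of_mem_cube {a : ℝ} (ha : 0 < a) {j : Fin d → ℤ}
    {y₁ y₂ : EuclideanSpace ℝ (Fin d)} (h₁ : y₁ ∈ cube d a j) (h₂ : y₂ ∈ cube d a j)
    (hne : y₁ ≠ y₂) : ‖y₁ - y₂‖ < a * Real.sqrt d := by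
  rcases Nat.eq_zero_or_pos d with hd | hd
  · exfalso; apply hne; subst hd; ext k; exact absurd k.2 (by omega)
  rw [EuclideanSpace.norm_eq]
  have hlt : ∀ k : Fin d, ‖(y₁ - y₂) k‖ ^ 2 < a ^ 2 := by
    intro k
    have e1 := h₁ k; have e2 := h₂ k
    simp only [Set.mem_Ioc] at e1 e2
    have : (y₁ - y₂) k = y₁ k - y₂ k := by simp
    rw [this, Real.norm_eq_abs, sq_abs]
    apply sq_lt_sq' <;> [linarith [e1.1, e2.2]; linarith [e1.2, e2.1]]
  have hsum : ∑ k : Fin d, ‖(y₁ - y₂) k‖ ^ 2 < ∑ _k : Fin d, a ^ 2 :=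
    Finset.sum_lt_sum_of_nonempty (by haveI : Nonempty (Fin d) := Fin.pos_iff_nonempty.mp hd; exact Finset.univ_nonempty) fun k _ => hlt k
  rw [Finset.sum_const] at hsum
  have : Real.sqrt (∑ k : Fin d, ‖(y₁ - y₂) k‖ ^ 2) < Real.sqrt (d * a ^ 2) := by
    apply Real.sqrt_lt_sqrt (Finset.sum_nonneg fun k _ => sq_nonneg _)
    simpa [Finset.card_univ, nsmul_eq_mul] using hsum
  calc Real.sqrt (∑ k : Fin d, ‖(y₁ - y₂) k‖ ^ 2) < Real.sqrt (↑d * a ^ 2) := this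
    _ = a * Real.sqrt d := by
        rw [Real.sqrt_mul (Nat.cast_nonneg d), Real.sqrt_sq ha.le, mul_comm]

lemma inter_cube_subsingleton {A : Set (EuclideanSpace ℝ (Fin d))} {α : ℝ}
    (hball : Metric.ball (0 : EuclideanSpace ℝ (Fin d)) α ⊆ A)
    {a : ℝ} (ha : 0 < a) (haα : a * Real.sqrt d ≤ α)
    {γ : Set (EuclideanSpace ℝ (Fin d))} (hauth : Authorised A γ) (j : Fin d → ℤ) :
    Set.Subsingleton (γ ∩ cube d a j) := by
  intro y₁ h₁ y₂ h₂
  by_contra hne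
  apply hauth y₁ h₁.1 y₂ h₂.1 hne
  apply hball
  rw [Metric.mem_ball, dist_zero_right]
  exact lt_of_lt_of_le (dist_lt_of_mem_cube ha h₁.2 h₂.2 hne) haα


lemma tsum_subtype_split {M : Type*} (f : M → ℝ≥0∞) (γ c : Set M) :
    ∑' y : γ, f y = (∑' y : ↥(γ \ c), f y) + ∑' y : ↥(γ ∩ c), f y := by
  have hd : Disjoint (γ \ c) (γ ∩ c) :=
    Set.disjoint_left.mpr fun _ hx h2 => hx.2 h2.2
  rw [← Summable.tsum_union_disjoint (f := f) hd ENNReal.summable ENNReal.summable,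
    Set.diff_union_inter]

lemma one_sub_expNegE_le {d : ℕ}
    {φ : EuclideanSpace ℝ (Fin d) → EuclideanSpace ℝ (Fin d) → ℝ≥0∞} {β : ℝ}
    {A : Set (EuclideanSpace ℝ (Fin d))} {α : ℝ}
    (hball : Metric.ball (0 : EuclideanSpace ℝ (Fin d)) α ⊆ A)
    {a : ℝ} (ha : 0 < a) (haα : a * Real.sqrt d ≤ α)
    {γ : Set (EuclideanSpace ℝ (Fin d))} (hauth : Authorised A γ)
    (j : Fin d → ℤ) (x : EuclideanSpace ℝ (Fin d)) :
    1 - expNegE (ENNReal.ofReal β * ∑' y : ↥(γ ∩ cube d a j), φ x y) ≤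
      ⨆ y' ∈ cube d a j, mayer φ β x y' := by
  rcases (inter_cube_subsingleton hball ha haα hauth j).eq_empty_or_singleton with h | ⟨y₀, h⟩
  · rw [h]
    have : ∑' y : (∅ : Set (EuclideanSpace ℝ (Fin d))), φ x y = 0 := tsum_empty
    rw [this, mul_zero]
    simp [expNegE]
  · have hy₀ : y₀ ∈ γ ∩ cube d a j := h ▸ rfl
    rw [h, tsum_singleton y₀ (fun y => φ x y)]
    exact le_iSup₂_of_le y₀ hy₀.2 (le_refl (mayer φ β x y₀))

lemma abs_sub_le_max' {p q : ℝ} (hp : p ≤ 1) (hq : q ≤ 1) :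
    |p - q| ≤ max (1 - p) (1 - q) := by
  rcases le_total p q with h | h
  · rw [abs_of_nonpos (by linarith), neg_sub]; exact le_max_of_le_left (by linarith)
  · rw [abs_of_nonneg (by linarith)]; exact le_max_of_le_right (by linarith)

lemma abs_hweight_sub_le {d : ℕ}
    {φ : EuclideanSpace ℝ (Fin d) → EuclideanSpace ℝ (Fin d) → ℝ≥0∞} {β : ℝ}
    {A : Set (EuclideanSpace ℝ (Fin d))} {α : ℝ}
    (hball : Metric.ball (0 : EuclideanSpace ℝ (Fin d)) α ⊆ A)
    {a : ℝ} (ha : 0 < a) (haα : a * Real.sqrt d ≤ α)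
    {γ γ' : Set (EuclideanSpace ℝ (Fin d))}
    (hauth : Authorised A γ) (hauth' : Authorised A γ')
    {j : Fin d → ℤ} (hagree : γ \ cube d a j = γ' \ cube d a j)
    (x : EuclideanSpace ℝ (Fin d)) :
    ENNReal.ofReal |hweight φ β γ x - hweight φ β γ' x| ≤
      ⨆ y' ∈ cube d a j, mayer φ β x y' := by
  have key : ∀ δ : Set (EuclideanSpace ℝ (Fin d)), γ \ cube d a j = δ \ cube d a j →
      hweight φ β δ x =
        expNegR (ENNReal.ofReal β * ∑' y : ↥(γ \ cube d a j), φ x y) *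
        expNegR (ENNReal.ofReal β * ∑' y : ↥(δ ∩ cube d a j), φ x y) := by
    intro δ hδ
    rw [hweight, tsum_subtype_split (fun y => φ x y) δ (cube d a j), mul_add,
      expNegR_add, ← hδ]
  have hfin : ∀ U : ℝ≥0∞, ENNReal.ofReal (1 - expNegR U) = 1 - expNegE U := by
    intro U
    rw [ENNReal.ofReal_sub _ (expNegR_nonneg U), ofReal_expNegR, ENNReal.ofReal_one]
  set U : ℝ≥0∞ := ENNReal.ofReal β * ∑' y : ↥(γ ∩ cube d a j), φ x y with hU
  set U' : ℝ≥0∞ := ENNReal.ofReal β * ∑' y : ↥(γ' ∩ cube d a j), φ x y with hU'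
  have hb : |hweight φ β γ x - hweight φ β γ' x| ≤ max (1 - expNegR U) (1 - expNegR U') := by
    rw [key γ rfl, key γ' hagree, ← mul_sub, abs_mul, abs_of_nonneg (expNegR_nonneg _)]
    calc _ ≤ 1 * |expNegR U - expNegR U'| :=
          mul_le_mul_of_nonneg_right (expNegR_le_one _) (abs_nonneg _)
      _ = |expNegR U - expNegR U'| := one_mul _
      _ ≤ _ := abs_sub_le_max' (expNegR_le_one _) (expNegR_le_one _)
  refine le_trans (ENNReal.ofReal_le_ofReal hb) ?_
  rcases max_cases (1 - expNegR U) (1 - expNegR U') with ⟨hmax, _⟩ | ⟨hmax, _⟩ <;>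
      rw [hmax, hfin]
  · exact one_sub_expNegE_le hball ha haα hauth j x
  · exact one_sub_expNegE_le hball ha haα hauth' j x

lemma alg_bound {z I I' J J' S₁ S₂ ε : ℝ} (hz : 0 < z) (hε0 : 0 ≤ ε) (hε1 : ε ≤ 1)
    (hJ0 : 0 ≤ J) (hJI : J ≤ I) (hJ'0 : 0 ≤ J') (hJ'I' : J' ≤ I')
    (h1 : J - J' ≤ S₁) (h2 : I' - I ≤ S₂) (hS1 : 0 ≤ S₁) (hS2 : 0 ≤ S₂) :
    (ε + z * J) / (1 + z * I) - (ε + z * J') / (1 + z * I') ≤ z * (S₁ + S₂) := by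
  have hI0 : 0 ≤ I := le_trans hJ0 hJI
  have hI'0 : 0 ≤ I' := le_trans hJ'0 hJ'I'
  have hD : 0 < 1 + z * I := by nlinarith
  have hD' : 0 < 1 + z * I' := by nlinarith
  rw [div_sub_div _ _ hD.ne' hD'.ne', div_le_iff₀ (by positivity)]
  have A1 : z * (J - J') * (1 + z * I) ≤ z * S₁ * ((1 + z * I) * (1 + z * I')) := by
    calc z * (J - J') * (1 + z * I) ≤ z * S₁ * (1 + z * I) :=
          mul_le_mul_of_nonneg_right (mul_le_mul_of_nonneg_left h1 hz.le) hD.le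
      _ ≤ z * S₁ * ((1 + z * I) * (1 + z * I')) := by
          nlinarith [mul_nonneg (mul_nonneg (mul_nonneg hz.le hS1) hD.le)
            (mul_nonneg hz.le hI'0)]
  have A2 : z * (I' - I) * (ε + z * J) ≤ z * S₂ * ((1 + z * I) * (1 + z * I')) := by
    rcases le_total (I' - I) 0 with hc | hc
    · have : z * (I' - I) * (ε + z * J) ≤ 0 :=
        mul_nonpos_of_nonpos_of_nonneg (mul_nonpos_of_nonneg_of_nonpos hz.le hc)
          (by nlinarith)
      nlinarith [mul_nonneg (mul_nonneg hz.le hS2) (mul_nonneg hD.le hD'.le)]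
    · have hεJ : ε + z * J ≤ (1 + z * I) * (1 + z * I') := by
        nlinarith [mul_nonneg hz.le hI'0,
          mul_nonneg (mul_nonneg hz.le hI0) (mul_nonneg hz.le hI'0),
          mul_le_mul_of_nonneg_left hJI hz.le]
      have := mul_le_mul (mul_le_mul_of_nonneg_left h2 hz.le) hεJ (by nlinarith)
        (by positivity)
      linarith
  nlinarith [A1, A2]

open Classical in
lemma specMeasure_repr {d : ℕ} {Λ : Set (EuclideanSpace ℝ (Fin d))}
    (hΛ : MeasurableSet Λ) (hvol : volume Λ ≠ ∞) {z : ℝ} (hz : 0 < z)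
    {h : EuclideanSpace ℝ (Fin d) → ℝ} (hm : Measurable h)
    (h0 : ∀ x, 0 ≤ h x) (h1 : ∀ x, h x ≤ 1)
    {B : Set (Unit ⊕ EuclideanSpace ℝ (Fin d))} (hB : MeasurableSet B) :
    specMeasure Λ z h B =
      ENNReal.ofReal ((((if Sum.inl () ∈ B then (1:ℝ) else 0)) +
          z * ∫ x in Sum.inr ⁻¹' B ∩ Λ, h x) / (1 + z * ∫ x in Λ, h x)) := by
  have hB2 : MeasurableSet (Sum.inr ⁻¹' B : Set (EuclideanSpace ℝ (Fin d))) :=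
    hB.preimage measurable_inr
  set e := Real.exp (-z * (volume Λ).toReal) with he_def
  have he : 0 < e := Real.exp_pos _
  have hIntΛ : IntegrableOn h Λ volume := by
    have hc1 : IntegrableOn (fun _ : EuclideanSpace ℝ (Fin d) => (1:ℝ)) Λ volume :=
      integrableOn_const hvol
    refine hc1.mono' hm.aestronglyMeasurable ?_
    exact Filter.Eventually.of_forall fun x => by
      rw [Real.norm_eq_abs, abs_of_nonneg (h0 x)]; exact h1 x
  have hIntS : IntegrableOn h (Sum.inr ⁻¹' B ∩ Λ) volume :=
    hIntΛ.mono_set Set.inter_subset_right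
  set I := ∫ x in Λ, h x with hI_def
  have hI0 : 0 ≤ I := setIntegral_nonneg hΛ fun x _ => h0 x
  have hden : 0 < 1 + z * I := by nlinarith
  have hZ : Zpart Λ z h = e * (1 + z * I) := rfl
  have hZ0 : 0 < Zpart Λ z h := by rw [hZ]; positivity
  set J := ∫ x in Sum.inr ⁻¹' B ∩ Λ, h x with hJ_def
  have hJ0 : 0 ≤ J := setIntegral_nonneg (hB2.inter hΛ) fun x _ => h0 x
  rw [specMeasure, Measure.add_apply, Measure.smul_apply, Measure.dirac_apply' _ hB,
    Measure.map_apply measurable_inr hB, withDensity_apply _ hB2,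
    Measure.restrict_restrict hB2]
  have hrw : ∀ x : EuclideanSpace ℝ (Fin d),
      z * e * h x / Zpart Λ z h = (z * e / Zpart Λ z h) * h x := fun x => by ring
  have hint2 : Integrable (fun x => z * e * h x / Zpart Λ z h)
      (volume.restrict (Sum.inr ⁻¹' B ∩ Λ)) := by
    simp only [hrw]; exact hIntS.const_mul _
  have hlint : ∫⁻ x in Sum.inr ⁻¹' B ∩ Λ, ENNReal.ofReal (z * e * h x / Zpart Λ z h) =
      ENNReal.ofReal (∫ x in Sum.inr ⁻¹' B ∩ Λ, z * e * h x / Zpart Λ z h) := by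
    rw [ofReal_integral_eq_lintegral_ofReal hint2]
    exact Filter.Eventually.of_forall fun x => by have := h0 x; positivity
  rw [hlint]
  have hintval : ∫ x in Sum.inr ⁻¹' B ∩ Λ, z * e * h x / Zpart Λ z h
      = (z * e / Zpart Λ z h) * J := by
    simp only [hrw]; exact integral_const_mul _ _
  rw [hintval]
  by_cases hmem : Sum.inl () ∈ B
  · rw [if_pos hmem, Set.indicator_of_mem hmem]
    simp only [Pi.one_apply, smul_eq_mul, mul_one]
    rw [← ENNReal.ofReal_add (by positivity) (by positivity)]
    congr 1
    rw [hZ, he_def]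
    field_simp
  · rw [if_neg hmem, Set.indicator_of_notMem hmem]
    simp only [smul_eq_mul, mul_zero, zero_add]
    congr 1
    rw [hZ, he_def]
    field_simp

open Classical in
lemma specMeasure_diff_le {d : ℕ} {Λ : Set (EuclideanSpace ℝ (Fin d))}
    (hΛ : MeasurableSet Λ) (hvol : volume Λ ≠ ∞) {z : ℝ} (hz : 0 < z)
    {f g : EuclideanSpace ℝ (Fin d) → ℝ}
    (hmf : Measurable f) (hf0 : ∀ x, 0 ≤ f x) (hf1 : ∀ x, f x ≤ 1)
    (hmg : Measurable g) (hg0 : ∀ x, 0 ≤ g x) (hg1 : ∀ x, g x ≤ 1)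
    {B : Set (Unit ⊕ EuclideanSpace ℝ (Fin d))} (hB : MeasurableSet B) :
    specMeasure Λ z f B - specMeasure Λ z g B ≤
      ENNReal.ofReal (z * ∫ x in Λ, |f x - g x|) := by
  have hIntf : IntegrableOn f Λ volume := by
    have hc1 : IntegrableOn (fun _ : EuclideanSpace ℝ (Fin d) => (1:ℝ)) Λ volume :=
      integrableOn_const hvol
    refine hc1.mono' hmf.aestronglyMeasurable ?_
    exact Filter.Eventually.of_forall fun x => by
      rw [Real.norm_eq_abs, abs_of_nonneg (hf0 x)]; exact hf1 x
  have hIntg : IntegrableOn g Λ volume := by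
    have hc1 : IntegrableOn (fun _ : EuclideanSpace ℝ (Fin d) => (1:ℝ)) Λ volume :=
      integrableOn_const hvol
    refine hc1.mono' hmg.aestronglyMeasurable ?_
    exact Filter.Eventually.of_forall fun x => by
      rw [Real.norm_eq_abs, abs_of_nonneg (hg0 x)]; exact hg1 x
  have hB2 : MeasurableSet (Sum.inr ⁻¹' B : Set (EuclideanSpace ℝ (Fin d))) :=
    hB.preimage measurable_inr
  have hS : (Sum.inr ⁻¹' B ∩ Λ : Set (EuclideanSpace ℝ (Fin d))) ⊆ Λ := Set.inter_subset_right
  have hIntfS : IntegrableOn f (Sum.inr ⁻¹' B ∩ Λ) volume := hIntf.mono_set hS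
  have hIntgS : IntegrableOn g (Sum.inr ⁻¹' B ∩ Λ) volume := hIntg.mono_set hS
  set ε : ℝ := if Sum.inl () ∈ B then (1:ℝ) else 0 with hε_def
  set I := ∫ x in Λ, f x with hI_def
  set I' := ∫ x in Λ, g x with hI'_def
  set J := ∫ x in Sum.inr ⁻¹' B ∩ Λ, f x with hJ_def
  set J' := ∫ x in Sum.inr ⁻¹' B ∩ Λ, g x with hJ'_def
  set S₁ := ∫ x in Λ, max (f x - g x) 0 with hS1_def
  set S₂ := ∫ x in Λ, max (g x - f x) 0 with hS2_def
  have hε0 : 0 ≤ ε := by rw [hε_def]; split_ifs <;> norm_num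
  have hε1 : ε ≤ 1 := by rw [hε_def]; split_ifs <;> norm_num
  have hJ0 : 0 ≤ J := setIntegral_nonneg (hB2.inter hΛ) fun x _ => hf0 x
  have hJ'0 : 0 ≤ J' := setIntegral_nonneg (hB2.inter hΛ) fun x _ => hg0 x
  have hJI : J ≤ I :=
    setIntegral_mono_set hIntf (Filter.Eventually.of_forall fun x => hf0 x)
      (HasSubset.Subset.eventuallyLE hS)
  have hJ'I' : J' ≤ I' :=
    setIntegral_mono_set hIntg (Filter.Eventually.of_forall fun x => hg0 x)
      (HasSubset.Subset.eventuallyLE hS)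
  have hS1nn : 0 ≤ S₁ := setIntegral_nonneg hΛ fun x _ => le_max_right _ 0
  have hS2nn : 0 ≤ S₂ := setIntegral_nonneg hΛ fun x _ => le_max_right _ 0
  have hd1 : J - J' ≤ S₁ := by
    have e1 : J - J' = ∫ x in Sum.inr ⁻¹' B ∩ Λ, (f x - g x) :=
      (integral_sub hIntfS hIntgS).symm
    have e2 : (∫ x in Sum.inr ⁻¹' B ∩ Λ, (f x - g x)) ≤
        ∫ x in Sum.inr ⁻¹' B ∩ Λ, max (f x - g x) 0 :=
      integral_mono (hIntfS.sub hIntgS) (hIntfS.sub hIntgS).pos_part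
        fun x => le_max_left _ 0
    have e3 : (∫ x in Sum.inr ⁻¹' B ∩ Λ, max (f x - g x) 0) ≤ S₁ :=
      setIntegral_mono_set (hIntf.sub hIntg).pos_part
        (Filter.Eventually.of_forall fun x => le_max_right _ 0)
        (HasSubset.Subset.eventuallyLE hS)
    linarith
  have hd2 : I' - I ≤ S₂ := by
    have e1 : I' - I = ∫ x in Λ, (g x - f x) := (integral_sub hIntg hIntf).symm
    have e2 : (∫ x in Λ, (g x - f x)) ≤ S₂ :=
      integral_mono (hIntg.sub hIntf) (hIntg.sub hIntf).pos_part
        fun x => le_max_left _ 0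
    linarith
  have hi1 : Integrable (fun x => max (f x - g x) 0) (volume.restrict Λ) := by
    simpa using (hIntf.sub hIntg).pos_part
  have hi2 : Integrable (fun x => max (g x - f x) 0) (volume.restrict Λ) := by
    simpa using (hIntg.sub hIntf).pos_part
  have hsum : S₁ + S₂ = ∫ x in Λ, |f x - g x| := by
    rw [hS1_def, hS2_def, ← integral_add hi1 hi2]
    congr 1
    funext x
    have : g x - f x = -(f x - g x) := by ring
    rw [this]
    exact (max_zero_add_max_neg_zero_eq_abs_self (f x - g x))
  rw [specMeasure_repr hΛ hvol hz hmf hf0 hf1 hB, specMeasure_repr hΛ hvol hz hmg hg0 hg1 hB]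
  have hI'0 : 0 ≤ I' := le_trans hJ'0 hJ'I'
  rw [← ENNReal.ofReal_sub _ (div_nonneg (by nlinarith [mul_nonneg hz.le hJ'0])
    (by nlinarith [mul_nonneg hz.le hI'0]))]
  apply ENNReal.ofReal_le_ofReal
  calc (ε + z * J) / (1 + z * I) - (ε + z * J') / (1 + z * I') ≤ z * (S₁ + S₂) :=
        alg_bound hz hε0 hε1 hJ0 hJI hJ'0 hJ'I' hd1 hd2 hS1nn hS2nn
    _ = z * ∫ x in Λ, |f x - g x| := by rw [hsum]

lemma tvEDist_specMeasure_le {d : ℕ} {Λ : Set (EuclideanSpace ℝ (Fin d))}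
    (hΛ : MeasurableSet Λ) (hvol : volume Λ ≠ ∞) {z : ℝ} (hz : 0 < z)
    {f g : EuclideanSpace ℝ (Fin d) → ℝ}
    (hmf : Measurable f) (hf0 : ∀ x, 0 ≤ f x) (hf1 : ∀ x, f x ≤ 1)
    (hmg : Measurable g) (hg0 : ∀ x, 0 ≤ g x) (hg1 : ∀ x, g x ≤ 1) :
    tvEDist (specMeasure Λ z f) (specMeasure Λ z g) ≤
      ENNReal.ofReal (z * ∫ x in Λ, |f x - g x|) := by
  refine iSup_le fun B => sup_le ?_ ?_
  · exact specMeasure_diff_le hΛ hvol hz hmf hf0 hf1 hmg hg0 hg1 B.2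
  · have : (∫ x in Λ, |g x - f x|) = ∫ x in Λ, |f x - g x| := by
      simp only [abs_sub_comm]
    rw [← this]
    exact specMeasure_diff_le hΛ hvol hz hmg hg0 hg1 hmf hf0 hf1 B.2

lemma finset_sum_lintegral_le {α ι : Type*} [MeasurableSpace α] (μ : Measure α)
    (f : ι → α → ℝ≥0∞) (F : Finset ι) :
    ∑ j ∈ F, ∫⁻ x, f j x ∂μ ≤ ∫⁻ x, ∑ j ∈ F, f j x ∂μ := by
  classical
  induction F using Finset.induction_on with
  | empty => simp
  | insert a F' hnot ih =>
    rw [Finset.sum_insert hnot]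
    refine le_trans (add_le_add_right ih _) ?_
    refine le_trans (le_lintegral_add _ _) (lintegral_mono fun x => le_of_eq ?_)
    rw [Finset.sum_insert hnot]

lemma tsum_lintegral_le {α ι : Type*} [MeasurableSpace α] [Countable ι] (μ : Measure α)
    (f : ι → α → ℝ≥0∞) :
    ∑' j, ∫⁻ x, f j x ∂μ ≤ ∫⁻ x, ∑' j, f j x ∂μ := by
  rw [ENNReal.tsum_eq_iSup_sum]
  refine iSup_le fun F => le_trans (finset_sum_lintegral_le μ f F)
    (lintegral_mono fun x => ENNReal.sum_le_tsum F)

end Aux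

/-- The sum over `j ≠ i` of the Dobrushin interdependence coefficients `k_{i,j}` of the
discretised continuum hard-core model is bounded by `z · sup_x ∫ Ψ_a(x,y) dy`. -/
theorem dobrushin_coefficients_le
    {d : ℕ} (φ : EuclideanSpace ℝ (Fin d) → EuclideanSpace ℝ (Fin d) → ℝ≥0∞)
    (hφ : Measurable (Function.uncurry φ))
    (hsym : ∀ x y, φ x y = φ y x)
    {β : ℝ} (hβ : 0 < β) {z : ℝ} (hz : 0 < z)
    {α : ℝ} (hα : 0 < α) (A : Set (EuclideanSpace ℝ (Fin d))) (hAmeas : MeasurableSet A)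
    (hball : Metric.ball (0 : EuclideanSpace ℝ (Fin d)) α ⊆ A)
    (hhc : ∀ x y : EuclideanSpace ℝ (Fin d), x - y ∈ A → φ x y = ∞)
    {a : ℝ} (ha : 0 < a) (haα : a * Real.sqrt d ≤ α)
    (i : Fin d → ℤ) :
    ∑' j : {j : Fin d → ℤ // j ≠ i},
        sSup {r : ℝ≥0∞ | ∃ γ γ' : Set (EuclideanSpace ℝ (Fin d)),
          γ.Countable ∧ γ'.Countable ∧
          γ ⊆ (cube d a i)ᶜ ∧ γ' ⊆ (cube d a i)ᶜ ∧
          Authorised A γ ∧ Authorised A γ' ∧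
          γ \ cube d a (j : Fin d → ℤ) = γ' \ cube d a (j : Fin d → ℤ) ∧
          r = tvEDist (specMeasure (cube d a i) z (hweight φ β γ))
              (specMeasure (cube d a i) z (hweight φ β γ'))} ≤
      ENNReal.ofReal z * ⨆ x : EuclideanSpace ℝ (Fin d), ∫⁻ y, Psi φ β a x y := by
  have hΛ : MeasurableSet (cube d a i) := cube_measurableSet a i
  have hvol : volume (cube d a i) = ENNReal.ofReal (a ^ d) := volume_cube ha.le i
  have hvolne : volume (cube d a i) ≠ ∞ := by rw [hvol]; exact ENNReal.ofReal_ne_top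
  have hkne0 : ENNReal.ofReal (a ^ d) ≠ 0 := by
    simp [ENNReal.ofReal_eq_zero, not_le, pow_pos ha]
  have hknetop : ENNReal.ofReal (a ^ d) ≠ ∞ := ENNReal.ofReal_ne_top
  set C := ⨆ x : EuclideanSpace ℝ (Fin d), ∫⁻ y, Psi φ β a x y with hC_def
  -- bound each term
  have hterm : ∀ j : Fin d → ℤ,
      sSup {r : ℝ≥0∞ | ∃ γ γ' : Set (EuclideanSpace ℝ (Fin d)),
          γ.Countable ∧ γ'.Countable ∧
          γ ⊆ (cube d a i)ᶜ ∧ γ' ⊆ (cube d a i)ᶜ ∧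
          Authorised A γ ∧ Authorised A γ' ∧
          γ \ cube d a j = γ' \ cube d a j ∧
          r = tvEDist (specMeasure (cube d a i) z (hweight φ β γ))
              (specMeasure (cube d a i) z (hweight φ β γ'))} ≤
        ENNReal.ofReal z * ∫⁻ x in cube d a i, ⨆ y' ∈ cube d a j, mayer φ β x y' := by
    intro j
    refine sSup_le ?_
    rintro r ⟨γ, γ', hγc, hγ'c, -, -, hauth, hauth', hagree, rfl⟩
    refine le_trans (tvEDist_specMeasure_le hΛ hvolne hz
      (hweight_measurable hφ β hγc) (hweight_nonneg φ β γ) (hweight_le_one φ β γ)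
      (hweight_measurable hφ β hγ'c) (hweight_nonneg φ β γ') (hweight_le_one φ β γ')) ?_
    rw [ENNReal.ofReal_mul hz.le]
    refine mul_le_mul_right ?_ _
    have hIntabs : Integrable
        (fun x => |hweight φ β γ x - hweight φ β γ' x|) (volume.restrict (cube d a i)) := by
      have hc1 : IntegrableOn (fun _ : EuclideanSpace ℝ (Fin d) => (1:ℝ))
          (cube d a i) volume := integrableOn_const hvolne
      refine hc1.mono' ?_ ?_
      · exact ((hweight_measurable hφ β hγc).sub
          (hweight_measurable hφ β hγ'c)).abs.aestronglyMeasurable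
      · refine Filter.Eventually.of_forall fun x => ?_
        rw [Real.norm_eq_abs, abs_abs]
        have h1 := hweight_nonneg φ β γ x
        have h2 := hweight_nonneg φ β γ' x
        have h3 := hweight_le_one φ β γ x
        have h4 := hweight_le_one φ β γ' x
        rw [abs_le]; constructor <;> linarith
    rw [ofReal_integral_eq_lintegral_ofReal hIntabs
      (Filter.Eventually.of_forall fun x => abs_nonneg _)]
    exact lintegral_mono fun x => abs_hweight_sub_le hball ha haα hauth hauth' hagree x
  -- pointwise identity for the Psi integral
  have hPsix : ∀ x : EuclideanSpace ℝ (Fin d),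
      (∑' j : Fin d → ℤ, ⨆ y' ∈ cube d a j, mayer φ β x y') =
        (∫⁻ y, Psi φ β a x y) * (ENNReal.ofReal (a ^ d))⁻¹ := by
    intro x
    have : ∫⁻ y, Psi φ β a x y =
        (∑' j : Fin d → ℤ, ⨆ y' ∈ cube d a j, mayer φ β x y') * ENNReal.ofReal (a ^ d) := by
      simp only [Psi]
      show (∫⁻ y, ∑' j : Fin d → ℤ,
        (cube d a j).indicator (fun _ => ⨆ y' ∈ cube d a j, mayer φ β x y') y) = _
      rw [lintegral_tsum fun j =>
        (measurable_const.indicator (cube_measurableSet a j)).aemeasurable,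
        ← ENNReal.tsum_mul_right]
      congr 1
      funext j
      rw [lintegral_indicator (cube_measurableSet a j), setLIntegral_const,
        volume_cube ha.le j]
    rw [this, mul_assoc, ENNReal.mul_inv_cancel hkne0 hknetop, mul_one]
  calc ∑' j : {j : Fin d → ℤ // j ≠ i}, sSup _
      ≤ ∑' j : {j : Fin d → ℤ // j ≠ i},
          ENNReal.ofReal z * ∫⁻ x in cube d a i,
            ⨆ y' ∈ cube d a (j : Fin d → ℤ), mayer φ β x y' :=
        ENNReal.tsum_le_tsum fun j => hterm (j : Fin d → ℤ)
    _ = ENNReal.ofReal z * ∑' j : {j : Fin d → ℤ // j ≠ i},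
          ∫⁻ x in cube d a i, ⨆ y' ∈ cube d a (j : Fin d → ℤ), mayer φ β x y' :=
        ENNReal.tsum_mul_left
    _ ≤ ENNReal.ofReal z * ∑' j : Fin d → ℤ,
          ∫⁻ x in cube d a i, ⨆ y' ∈ cube d a j, mayer φ β x y' := by
        refine mul_le_mul_right ?_ _
        exact Summable.tsum_le_tsum_of_inj (Subtype.val) Subtype.val_injective
          (fun c _ => zero_le) (fun j => le_rfl) ENNReal.summable ENNReal.summable
    _ ≤ ENNReal.ofReal z * ∫⁻ x in cube d a i,
          ∑' j : Fin d → ℤ, ⨆ y' ∈ cube d a j, mayer φ β x y' :=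
        mul_le_mul_right (tsum_lintegral_le _ _) _
    _ ≤ ENNReal.ofReal z * ∫⁻ _x in cube d a i, C * (ENNReal.ofReal (a ^ d))⁻¹ := by
        refine mul_le_mul_right (lintegral_mono fun x => ?_) _
        rw [hPsix x]
        exact mul_le_mul_left (le_iSup (fun x' => ∫⁻ y, Psi φ β a x' y) x) _
    _ = ENNReal.ofReal z * C := by
        rw [setLIntegral_const, hvol, mul_assoc, ENNReal.inv_mul_cancel hkne0 hknetop,
          mul_one]
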